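/- arXiv:2106.14656 — 7 statements merged into one kernel-verified Lean document; each statement's English description precedes it below -/
import Mathlib

section
/- (Algebraic core of Proposition on para-Einstein-like manifolds admitting a para-Ricci-like soliton.) Let (φ, ξ, η) be an apapR structure on V, let a, b, c, λ, μ, ν ∈ ℝ, and let A be a linear endomorphism of V (playing the role of x ↦ ∇_x ξ) such that ⟪A(x), ξ⟫ = 0 for all x, and such that for all x, y: ⟪A(x), y⟫ + ⟪x, A(y)⟫ = −2[(a+λ)⟪x, y⟫ + (b+μ)⟪x, φ(y)⟫ + (b+c+μ+ν)η(x)η(y)]. Then a+b+c = −(λ+μ+ν) and A(ξ) = 0 (i.e. ξ is geodesic). -/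
open RealInnerProductSpace

/-- algebraic core of the proposition on para-Einstein-like manifolds
admitting a para-Ricci-like soliton: with A playing the role of x ↦ ∇ₓξ,
one gets a+b+c = −(λ+μ+ν) and A(ξ) = 0 (ξ is geodesic). -/
theorem stmt_9 {V : Type*} [NormedAddCommGroup V] [InnerProductSpace ℝ V]
    [FiniteDimensional ℝ V] (n : ℕ) (hn : 1 ≤ n)
    (hdim : Module.finrank ℝ V = 2 * n + 1)
    (φ : V →ₗ[ℝ] V) (ξ : V) (η : V →ₗ[ℝ] ℝ)
    (hφξ : φ ξ = 0)
    (hφ2 : ∀ x : V, φ (φ x) = x - η x • ξ)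
    (hηφ : ∀ x : V, η (φ x) = 0)
    (hηξ : η ξ = 1)
    (htr : LinearMap.trace ℝ V φ = 0)
    (hcomp : ∀ x y : V, ⟪φ x, φ y⟫ = ⟪x, y⟫ - η x * η y)
    (a b c lm mu nu : ℝ)
    (A : V →ₗ[ℝ] V)
    (hAξ : ∀ x : V, ⟪A x, ξ⟫ = 0)
    (hA : ∀ x y : V, ⟪A x, y⟫ + ⟪x, A y⟫ =
      -2 * ((a + lm) * ⟪x, y⟫ + (b + mu) * ⟪x, φ y⟫
        + (b + c + mu + nu) * (η x * η y))) :
    a + b + c = -(lm + mu + nu) ∧ A ξ = 0 := by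

  have hξξ : ⟪ξ, ξ⟫ = 1 := by
    have := hcomp ξ ξ
    rw [hφξ, hηξ] at this
    simp at this
    rw [real_inner_self_eq_norm_sq]; linarith
  have hxξ : ∀ x : V, ⟪x, ξ⟫ = η x := by
    intro x
    have := hcomp x ξ
    rw [hφξ, hηξ] at this
    simp at this
    linarith
  have hsum : (a + lm) + (b + c + mu + nu) = 0 := by
    have h := hA ξ ξ
    rw [hφξ, hηξ, hξξ] at h
    have h1 : ⟪A ξ, ξ⟫ = 0 := hAξ ξ
    have h2 : ⟪ξ, A ξ⟫ = 0 := by rw [real_inner_comm]; exact h1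
    rw [h1, h2] at h
    simp at h
    linarith
  constructor
  · linarith
  · have hAξ0 : ∀ x : V, ⟪x, A ξ⟫ = 0 := by
      intro x
      have h := hA x ξ
      rw [hφξ, hηξ, hxξ x] at h
      rw [hAξ x] at h
      simp only [inner_zero_right, zero_add, mul_zero, add_zero, mul_one] at h
      have h2 : (a + lm + (b + c + mu + nu)) * η x = 0 := by rw [hsum]; ring
      linear_combination h - 2 * h2
    have := hAξ0 (A ξ)
    rwa [inner_self_eq_zero] at this
end

section
/- (Algebraic core of: the Reeb vector field of a para-Sasaki-like manifold is not torse-forming.) Let (φ, ξ, η) be an apapR structure on V with n ≥ 1. Then there is no real number f such that φ(x) = f·(x − η(x)ξ) for all x ∈ V; i.e. the para-Sasaki-like condition ∇_x ξ = φ(x) is incompatible with the torse-forming condition ∇_x ξ = f(x − η(x)ξ). -/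
open RealInnerProductSpace

lemma trace_smulRight_aux {V : Type*} [NormedAddCommGroup V] [InnerProductSpace ℝ V]
    [FiniteDimensional ℝ V] (ξ : V) (η : V →ₗ[ℝ] ℝ) :
    LinearMap.trace ℝ V (η.smulRight ξ) = η ξ := by
  have h : η.smulRight ξ = (LinearMap.toSpanSingleton ℝ V ξ).comp η := by
    ext x; simp [LinearMap.toSpanSingleton]
  rw [h, LinearMap.trace_comp_comm']
  simp [LinearMap.trace_eq_matrix_trace ℝ (Module.Basis.singleton Unit ℝ), Matrix.trace,
    LinearMap.toSpanSingleton, LinearMap.toMatrix_apply]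

/-- the Reeb vector field of a para-Sasaki-like manifold is not
torse-forming: there is no f ∈ ℝ with φ(x) = f·(x − η(x)ξ) for all x. -/
theorem stmt_10 {V : Type*} [NormedAddCommGroup V] [InnerProductSpace ℝ V]
    [FiniteDimensional ℝ V] (n : ℕ) (hn : 1 ≤ n)
    (hdim : Module.finrank ℝ V = 2 * n + 1)
    (φ : V →ₗ[ℝ] V) (ξ : V) (η : V →ₗ[ℝ] ℝ)
    (hφξ : φ ξ = 0)
    (hφ2 : ∀ x : V, φ (φ x) = x - η x • ξ)
    (hηφ : ∀ x : V, η (φ x) = 0)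
    (hηξ : η ξ = 1)
    (htr : LinearMap.trace ℝ V φ = 0)
    (hcomp : ∀ x y : V, ⟪φ x, φ y⟫ = ⟪x, y⟫ - η x * η y) :
    ¬ ∃ f : ℝ, ∀ x : V, φ x = f • (x - η x • ξ) := by
  rintro ⟨f, hf⟩
  -- φ = f • (id - η.smulRight ξ)
  have hφ : φ = f • (LinearMap.id - η.smulRight ξ) := by
    ext x; simp [hf x]
  -- trace computation gives f = 0
  have htr' : LinearMap.trace ℝ V φ = f * (2 * n) := by
    rw [hφ]
    simp [LinearMap.trace_id, trace_smulRight_aux, hdim, hηξ]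
  have hf0 : f = 0 := by
    rw [htr'] at htr
    have : (2 * n : ℝ) ≠ 0 := by positivity
    exact by
      rcases mul_eq_zero.mp htr with h | h
      · exact h
      · exact absurd h this
  -- then φ = 0
  have hφ0 : ∀ x : V, φ x = 0 := by
    intro x; rw [hf x, hf0, zero_smul]
  -- ker η is nontrivial
  have hker : ∃ x : V, η x = 0 ∧ x ≠ 0 := by
    have h1 : Module.finrank ℝ (LinearMap.range η) ≤ 1 :=
      le_trans (Submodule.finrank_le _) (by simp)
    have h2 := LinearMap.finrank_range_add_finrank_ker η
    have h3 : 0 < Module.finrank ℝ (LinearMap.ker η) := by omega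
    have h4 : LinearMap.ker η ≠ ⊥ := by
      intro hbot
      rw [hbot] at h3
      simp at h3
    obtain ⟨x, hx, hx0⟩ := Submodule.exists_mem_ne_zero_of_ne_bot h4
    exact ⟨x, hx, hx0⟩
  obtain ⟨x, hη0, hx0⟩ := hker
  have := hφ2 x
  rw [hφ0 x, hφ0 0, hη0, zero_smul, sub_zero] at this
  exact hx0 this.symm
end

section
/- (Example 1, Lie algebra.) For all p, q ∈ ℝ, the antisymmetric bilinear bracket on ℝ⁵ defined on the standard basis e₀, e₁, e₂, e₃, e₄ by [e₀,e₁] = p·e₂ − e₃ + q·e₄, [e₀,e₂] = −p·e₁ − q·e₃ − e₄, [e₀,e₃] = −e₁ + q·e₂ + p·e₄, [e₀,e₄] = −q·e₁ − e₂ − p·e₃, and [eᵢ,eⱼ] = 0 for i, j ∈ {1,2,3,4}, satisfies the Jacobi identity, hence defines a Lie algebra structure on ℝ⁵. -/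
open RealInnerProductSpace

/-- The standard basis of ℝ⁵ (as a Euclidean space). -/
noncomputable def e5 (i : Fin 5) : EuclideanSpace ℝ (Fin 5) :=
  EuclideanSpace.single i 1

lemma decomp5 (v : EuclideanSpace ℝ (Fin 5)) :
    v = v 0 • e5 0 + v 1 • e5 1 + v 2 • e5 2 + v 3 • e5 3 + v 4 • e5 4 := by
  ext i
  fin_cases i <;> simp [e5, EuclideanSpace.single_apply]


/-- Example 1, Lie algebra: the antisymmetric bilinear bracket on ℝ⁵
defined on the standard basis by [e₀,e₁] = p·e₂ − e₃ + q·e₄,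
[e₀,e₂] = −p·e₁ − q·e₃ − e₄, [e₀,e₃] = −e₁ + q·e₂ + p·e₄,
[e₀,e₄] = −q·e₁ − e₂ − p·e₃ and [eᵢ,eⱼ] = 0 for i,j ∈ {1,2,3,4}
satisfies the Jacobi identity. -/
theorem stmt_12 (p q : ℝ)
    (B : EuclideanSpace ℝ (Fin 5) →ₗ[ℝ] EuclideanSpace ℝ (Fin 5) →ₗ[ℝ] EuclideanSpace ℝ (Fin 5))
    (hanti : ∀ x y : EuclideanSpace ℝ (Fin 5), B x y = -B y x)
    (h01 : B (e5 0) (e5 1) = p • e5 2 - e5 3 + q • e5 4)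
    (h02 : B (e5 0) (e5 2) = (-p) • e5 1 - q • e5 3 - e5 4)
    (h03 : B (e5 0) (e5 3) = -e5 1 + q • e5 2 + p • e5 4)
    (h04 : B (e5 0) (e5 4) = (-q) • e5 1 - e5 2 - p • e5 3)
    (hij : ∀ i j : Fin 5, i ≠ 0 → j ≠ 0 → B (e5 i) (e5 j) = 0) :
    ∀ x y z : EuclideanSpace ℝ (Fin 5),
      B x (B y z) + B y (B z x) + B z (B x y) = 0 := by
  -- B e0 e0 = 0
  have he00 : B (e5 0) (e5 0) = 0 := by
    have h := hanti (e5 0) (e5 0)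
    have h2 : (2:ℝ) • B (e5 0) (e5 0) = 0 := by
      rw [two_smul]; nth_rewrite 1 [h]; abel
    simpa using (smul_eq_zero.mp h2).resolve_left (by norm_num)
  -- brackets of vectors vanishing at 0 are zero
  have hzz : ∀ v w : EuclideanSpace ℝ (Fin 5), v 0 = 0 → w 0 = 0 → B v w = 0 := by
    intro v w hv hw
    rw [decomp5 v, decomp5 w, hv, hw]
    simp [map_add, map_smul, hij]
  -- all brackets have zero 0-th coordinate
  have hb0 : ∀ v w : EuclideanSpace ℝ (Fin 5), (B v w) 0 = 0 := by
    intro v w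
    have h10 : B (e5 1) (e5 0) = -(p • e5 2 - e5 3 + q • e5 4) := by rw [hanti, h01]
    have h20 : B (e5 2) (e5 0) = -((-p) • e5 1 - q • e5 3 - e5 4) := by rw [hanti, h02]
    have h30 : B (e5 3) (e5 0) = -(-e5 1 + q • e5 2 + p • e5 4) := by rw [hanti, h03]
    have h40 : B (e5 4) (e5 0) = -((-q) • e5 1 - e5 2 - p • e5 3) := by rw [hanti, h04]
    rw [decomp5 v, decomp5 w]
    simp only [map_add, map_smul, LinearMap.add_apply, LinearMap.smul_apply,
      he00, h01, h02, h03, h04, h10, h20, h30, h40]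
    simp only [hij 1 1 (by decide) (by decide), hij 1 2 (by decide) (by decide),
      hij 1 3 (by decide) (by decide), hij 1 4 (by decide) (by decide),
      hij 2 1 (by decide) (by decide), hij 2 2 (by decide) (by decide),
      hij 2 3 (by decide) (by decide), hij 2 4 (by decide) (by decide),
      hij 3 1 (by decide) (by decide), hij 3 2 (by decide) (by decide),
      hij 3 3 (by decide) (by decide), hij 3 4 (by decide) (by decide),
      hij 4 1 (by decide) (by decide), hij 4 2 (by decide) (by decide),
      hij 4 3 (by decide) (by decide), hij 4 4 (by decide) (by decide)]
    simp [e5, EuclideanSpace.single_apply]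
  intro x y z
  set x' := x - x 0 • e5 0 with hx'def
  set y' := y - y 0 • e5 0 with hy'def
  set z' := z - z 0 • e5 0 with hz'def
  have e50 : (e5 0 : EuclideanSpace ℝ (Fin 5)) 0 = 1 := by
    simp [e5, EuclideanSpace.single_apply]
  have hx0 : x' 0 = 0 := by simp [hx'def, e50]
  have hy0 : y' 0 = 0 := by simp [hy'def, e50]
  have hz0 : z' 0 = 0 := by simp [hz'def, e50]
  have hx : x = x 0 • e5 0 + x' := by rw [hx'def]; abel
  have hy : y = y 0 • e5 0 + y' := by rw [hy'def]; abel
  have hz : z = z 0 • e5 0 + z' := by rw [hz'def]; abel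
  -- compute inner brackets
  have key : ∀ (a b : EuclideanSpace ℝ (Fin 5)) (a' b' : EuclideanSpace ℝ (Fin 5)),
      a' 0 = 0 → b' 0 = 0 → a = a 0 • e5 0 + a' → b = b 0 • e5 0 + b' →
      B a b = a 0 • B (e5 0) b' - b 0 • B (e5 0) a' := by
    intro a b a' b' ha0 hb0' ha hb
    nth_rewrite 1 [ha, hb]
    simp only [map_add, map_smul, LinearMap.add_apply, LinearMap.smul_apply]
    rw [he00, hzz a' b' ha0 hb0', hanti a' (e5 0)]
    module
  have hyz := key y z y' z' hy0 hz0 hy hz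
  have hzx := key z x z' x' hz0 hx0 hz hx
  have hxy := key x y x' y' hx0 hy0 hx hy
  -- outer brackets
  have outer : ∀ (a a' w : EuclideanSpace ℝ (Fin 5)), a' 0 = 0 → a = a 0 • e5 0 + a' →
      w 0 = 0 → B a w = a 0 • B (e5 0) w := by
    intro a a' w ha0 ha hw0
    nth_rewrite 1 [ha]
    simp only [map_add, map_smul, LinearMap.add_apply, LinearMap.smul_apply]
    rw [hzz a' w ha0 hw0]
    module
  have w1 : (B y z) 0 = 0 := hb0 y z
  have w2 : (B z x) 0 = 0 := hb0 z x
  have w3 : (B x y) 0 = 0 := hb0 x y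
  rw [outer x x' (B y z) hx0 hx w1, outer y y' (B z x) hy0 hy w2,
      outer z z' (B x y) hz0 hz w3, hyz, hzx, hxy]
  simp only [map_sub, map_smul, smul_sub, smul_smul]
  module
end

section
/- (Example 1, para-Sasaki-like property.) Consider ℝ⁵ with the standard inner product ⟪·,·⟫, standard basis e₀,…,e₄, the Lie bracket [e₀,e₁] = p·e₂ − e₃ + q·e₄, [e₀,e₂] = −p·e₁ − q·e₃ − e₄, [e₀,e₃] = −e₁ + q·e₂ + p·e₄, [e₀,e₄] = −q·e₁ − e₂ − p·e₃, [eᵢ,eⱼ] = 0 for i, j ∈ {1,2,3,4} (p, q ∈ ℝ), and the Koszul product ∇ defined by 2⟪∇ₓy, z⟫ = ⟪[x,y], z⟫ − ⟪[y,z], x⟫ + ⟪[z,x], y⟫. Let ξ = e₀, η = ⟪·, e₀⟫, and let φ be the linear map with φ(e₀) = 0, φ(e₁) = e₃, φ(e₂) = e₄, φ(e₃) = e₁, φ(e₄) = e₂. Then for all x, y ∈ ℝ⁵: ∇ₓ(φ(y)) − φ(∇ₓy) = −⟪x, y⟫·ξ − η(y)·x + 2η(x)η(y)·ξ; i.e.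 the structure is para-Sasaki-like. -/
set_option maxHeartbeats 2000000

open RealInnerProductSpace

/-- Example 1, para-Sasaki-like property: for the 5-dimensional Lie
group of Example 1 with ξ = e₀, η = ⟪·,e₀⟫ and φ given by φ(e₀) = 0, φ(e₁) = e₃,
φ(e₂) = e₄, φ(e₃) = e₁, φ(e₄) = e₂, one has
(∇ₓφ)y = −⟪x,y⟫ξ − η(y)x + 2η(x)η(y)ξ; i.e. the structure is para-Sasaki-like. -/
theorem stmt_14 (p q : ℝ)
    (B : EuclideanSpace ℝ (Fin 5) →ₗ[ℝ] EuclideanSpace ℝ (Fin 5) →ₗ[ℝ] EuclideanSpace ℝ (Fin 5))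
    (hanti : ∀ x y : EuclideanSpace ℝ (Fin 5), B x y = -B y x)
    (h01 : B (e5 0) (e5 1) = p • e5 2 - e5 3 + q • e5 4)
    (h02 : B (e5 0) (e5 2) = (-p) • e5 1 - q • e5 3 - e5 4)
    (h03 : B (e5 0) (e5 3) = -e5 1 + q • e5 2 + p • e5 4)
    (h04 : B (e5 0) (e5 4) = (-q) • e5 1 - e5 2 - p • e5 3)
    (hij : ∀ i j : Fin 5, i ≠ 0 → j ≠ 0 → B (e5 i) (e5 j) = 0)
    (nab : EuclideanSpace ℝ (Fin 5) →ₗ[ℝ] EuclideanSpace ℝ (Fin 5) →ₗ[ℝ] EuclideanSpace ℝ (Fin 5))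
    (hKoszul : ∀ x y z : EuclideanSpace ℝ (Fin 5),
      2 * ⟪nab x y, z⟫ = ⟪B x y, z⟫ - ⟪B y z, x⟫ + ⟪B z x, y⟫)
    (φ : EuclideanSpace ℝ (Fin 5) →ₗ[ℝ] EuclideanSpace ℝ (Fin 5))
    (hφ0 : φ (e5 0) = 0) (hφ1 : φ (e5 1) = e5 3) (hφ2 : φ (e5 2) = e5 4)
    (hφ3 : φ (e5 3) = e5 1) (hφ4 : φ (e5 4) = e5 2) :
    ∀ x y : EuclideanSpace ℝ (Fin 5),
      nab x (φ y) - φ (nab x y) =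
        -(⟪x, y⟫ • e5 0) - ⟪y, e5 0⟫ • x
          + (2 * (⟪x, e5 0⟫ * ⟪y, e5 0⟫)) • e5 0 := by
  have hip : ∀ v w : EuclideanSpace ℝ (Fin 5),
      ⟪v, w⟫ = v 0 * w 0 + v 1 * w 1 + v 2 * w 2 + v 3 * w 3 + v 4 * w 4 := by
    intro v w; simp [PiLp.inner_apply, Fin.sum_univ_five]; ring
  have hdec : ∀ v : EuclideanSpace ℝ (Fin 5),
      v = v 0 • e5 0 + v 1 • e5 1 + v 2 • e5 2 + v 3 • e5 3 + v 4 • e5 4 := by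
    intro v; ext k; fin_cases k <;> simp [e5, EuclideanSpace.single_apply]
  have hB00 : B (e5 0) (e5 0) = 0 := by
    have h := hanti (e5 0) (e5 0)
    have h2 : (2 : ℝ) • B (e5 0) (e5 0) = 0 := by rw [two_smul]; nth_rewrite 1 [h]; abel
    simpa using h2
  have hBgen : ∀ a b : EuclideanSpace ℝ (Fin 5), B a b =
      (a 0 * b 1 - b 0 * a 1) • (p • e5 2 - e5 3 + q • e5 4)
      + (a 0 * b 2 - b 0 * a 2) • ((-p) • e5 1 - q • e5 3 - e5 4)
      + (a 0 * b 3 - b 0 * a 3) • (-e5 1 + q • e5 2 + p • e5 4)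
      + (a 0 * b 4 - b 0 * a 4) • ((-q) • e5 1 - e5 2 - p • e5 3) := by
    intro a b
    conv_lhs => rw [hdec a, hdec b]
    simp only [map_add, map_smul, LinearMap.add_apply, LinearMap.smul_apply]
    rw [hB00, h01, h02, h03, h04,
      hanti (e5 1) (e5 0), hanti (e5 2) (e5 0), hanti (e5 3) (e5 0), hanti (e5 4) (e5 0),
      h01, h02, h03, h04,
      hij 1 1 (by decide) (by decide), hij 1 2 (by decide) (by decide),
      hij 1 3 (by decide) (by decide), hij 1 4 (by decide) (by decide),
      hij 2 1 (by decide) (by decide), hij 2 2 (by decide) (by decide),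
      hij 2 3 (by decide) (by decide), hij 2 4 (by decide) (by decide),
      hij 3 1 (by decide) (by decide), hij 3 2 (by decide) (by decide),
      hij 3 3 (by decide) (by decide), hij 3 4 (by decide) (by decide),
      hij 4 1 (by decide) (by decide), hij 4 2 (by decide) (by decide),
      hij 4 3 (by decide) (by decide), hij 4 4 (by decide) (by decide)]
    module
  have hnab : ∀ a b : EuclideanSpace ℝ (Fin 5), nab a b =
      (-(a 1 * b 3 + a 3 * b 1 + a 2 * b 4 + a 4 * b 2)) • e5 0
      + (a 0 * (-(p * b 2) - q * b 4) + b 0 * a 3) • e5 1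
      + (a 0 * (p * b 1 + q * b 3) + b 0 * a 4) • e5 2
      + (a 0 * (-(q * b 2) - p * b 4) + b 0 * a 1) • e5 3
      + (a 0 * (q * b 1 + p * b 3) + b 0 * a 2) • e5 4 := by
    intro a b
    refine ext_inner_right ℝ fun z => ?_
    have hk := hKoszul a b z
    rw [hBgen a b, hBgen b z, hBgen z a] at hk
    simp (config := { decide := true }) only [hip, e5, EuclideanSpace.single_apply,
      PiLp.add_apply, PiLp.smul_apply, PiLp.sub_apply, PiLp.neg_apply, smul_eq_mul,
      if_true, if_false, mul_zero, mul_one, zero_mul, one_mul, add_zero, zero_add, neg_zero,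
      sub_zero] at hk ⊢
    linarith
  have hφv : ∀ v : EuclideanSpace ℝ (Fin 5),
      φ v = v 3 • e5 1 + v 4 • e5 2 + v 1 • e5 3 + v 2 • e5 4 := by
    intro v
    conv_lhs => rw [hdec v]
    simp only [map_add, map_smul, hφ0, hφ1, hφ2, hφ3, hφ4, smul_zero]
    module
  intro x y
  refine ext_inner_right ℝ fun z => ?_
  rw [hnab x (φ y), hφv (nab x y), hnab x y, hφv y]
  simp (config := { decide := true }) only [hip, e5, EuclideanSpace.single_apply,
    PiLp.add_apply, PiLp.smul_apply, PiLp.sub_apply, PiLp.neg_apply, smul_eq_mul,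
    if_true, if_false, mul_zero, mul_one, zero_mul, one_mul, add_zero, zero_add, neg_zero,
    sub_zero] at *
  ring
end

section
/- (Example 2, Einstein property.) Consider ℝ³ with the standard inner product ⟪·,·⟫, standard basis e₀, e₁, e₂, and the Lie bracket [e₀,e₁] = p·e₁, [e₀,e₂] = p·e₂, [e₁,e₂] = 0 for a fixed p ∈ ℝ. Let ∇ be the bilinear map defined by the Koszul formula 2⟪∇ₓy, z⟫ = ⟪[x,y], z⟫ − ⟪[y,z], x⟫ + ⟪[z,x], y⟫, let R(x,y)z = ∇ₓ(∇_y z) − ∇_y(∇ₓ z) − ∇_{[x,y]}z, and let ρ(x,y) = Σᵢ₌₀² ⟪R(eᵢ, x)y, eᵢ⟫. Then ρ(x, y) = −2p²·⟪x, y⟫ for all x, y; i.e. the manifold is Einstein with constants (a, b, c) = (−2p², 0, 0). -/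
open RealInnerProductSpace

/-- The standard basis of ℝ³ (as a Euclidean space). -/
noncomputable def e3 (i : Fin 3) : EuclideanSpace ℝ (Fin 3) :=
  EuclideanSpace.single i 1

lemma e3_inner (v : EuclideanSpace ℝ (Fin 3)) (k : Fin 3) : ⟪v, e3 k⟫ = v k := by
  simp [e3, EuclideanSpace.inner_single_right]

lemma ext3 {v w : EuclideanSpace ℝ (Fin 3)} (h : ∀ k, ⟪v, e3 k⟫ = ⟪w, e3 k⟫) : v = w := by
  ext k; have := h k; rwa [e3_inner, e3_inner] at this

lemma ext3' {v w : EuclideanSpace ℝ (Fin 3)} (h0 : ⟪v, e3 0⟫ = ⟪w, e3 0⟫)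
    (h1 : ⟪v, e3 1⟫ = ⟪w, e3 1⟫) (h2 : ⟪v, e3 2⟫ = ⟪w, e3 2⟫) : v = w := by
  apply ext3
  intro k
  fin_cases k
  · exact h0
  · exact h1
  · exact h2

lemma decomp3 (x : EuclideanSpace ℝ (Fin 3)) : x = x 0 • e3 0 + x 1 • e3 1 + x 2 • e3 2 := by
  apply ext3
  intro k
  rw [e3_inner, e3_inner]
  fin_cases k <;>
    simp [e3, EuclideanSpace.single_apply]

lemma e3e3 (i j : Fin 3) : ⟪e3 i, e3 j⟫ = if i = j then 1 else 0 := by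
  rw [e3_inner]; simp [e3, EuclideanSpace.single_apply, eq_comm]

set_option maxHeartbeats 2000000 in
/-- Example 2, Einstein property: for the 3-dimensional Lie group
with bracket [e₀,e₁] = p·e₁, [e₀,e₂] = p·e₂, [e₁,e₂] = 0, the Ricci form of the
Koszul (Levi-Civita) product satisfies ρ(x,y) = −2p²·⟪x,y⟫; i.e. the manifold is
Einstein with constants (a,b,c) = (−2p²,0,0). -/
theorem stmt_16 (p : ℝ)
    (B : EuclideanSpace ℝ (Fin 3) →ₗ[ℝ] EuclideanSpace ℝ (Fin 3) →ₗ[ℝ] EuclideanSpace ℝ (Fin 3))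
    (hanti : ∀ x y : EuclideanSpace ℝ (Fin 3), B x y = -B y x)
    (h01 : B (e3 0) (e3 1) = p • e3 1)
    (h02 : B (e3 0) (e3 2) = p • e3 2)
    (h12 : B (e3 1) (e3 2) = 0)
    (nab : EuclideanSpace ℝ (Fin 3) →ₗ[ℝ] EuclideanSpace ℝ (Fin 3) →ₗ[ℝ] EuclideanSpace ℝ (Fin 3))
    (hKoszul : ∀ x y z : EuclideanSpace ℝ (Fin 3),
      2 * ⟪nab x y, z⟫ = ⟪B x y, z⟫ - ⟪B y z, x⟫ + ⟪B z x, y⟫)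
    (R : EuclideanSpace ℝ (Fin 3) → EuclideanSpace ℝ (Fin 3) →
      EuclideanSpace ℝ (Fin 3) → EuclideanSpace ℝ (Fin 3))
    (hR : ∀ x y z : EuclideanSpace ℝ (Fin 3),
      R x y z = nab x (nab y z) - nab y (nab x z) - nab (B x y) z)
    (ρ : EuclideanSpace ℝ (Fin 3) → EuclideanSpace ℝ (Fin 3) → ℝ)
    (hρ : ∀ x y : EuclideanSpace ℝ (Fin 3), ρ x y = ∑ i : Fin 3, ⟪R (e3 i) x y, e3 i⟫) :
    ∀ x y : EuclideanSpace ℝ (Fin 3),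
      ρ x y = -(2 * p ^ 2) * ⟪x, y⟫ := by
  have hdiag : ∀ x : EuclideanSpace ℝ (Fin 3), B x x = 0 := by
    intro x
    have h := hanti x x
    have h2 : (2 : ℝ) • B x x = 0 := by
      rw [two_smul]; exact eq_neg_iff_add_eq_zero.mp h
    simpa using (smul_eq_zero.mp h2).resolve_left (by norm_num)
  have h00 : B (e3 0) (e3 0) = 0 := hdiag _
  have h11 : B (e3 1) (e3 1) = 0 := hdiag _
  have h22 : B (e3 2) (e3 2) = 0 := hdiag _
  have h10 : B (e3 1) (e3 0) = (-p) • e3 1 := by rw [hanti, h01]; module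
  have h20 : B (e3 2) (e3 0) = (-p) • e3 2 := by rw [hanti, h02]; module
  have h21 : B (e3 2) (e3 1) = 0 := by rw [hanti, h12]; simp
  have key : ∀ (x y v : EuclideanSpace ℝ (Fin 3)),
      2 * ⟪v, e3 0⟫ = ⟪B x y, e3 0⟫ - ⟪B y (e3 0), x⟫ + ⟪B (e3 0) x, y⟫ →
      2 * ⟪v, e3 1⟫ = ⟪B x y, e3 1⟫ - ⟪B y (e3 1), x⟫ + ⟪B (e3 1) x, y⟫ →
      2 * ⟪v, e3 2⟫ = ⟪B x y, e3 2⟫ - ⟪B y (e3 2), x⟫ + ⟪B (e3 2) x, y⟫ →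
      nab x y = v := by
    intro x y v hv0 hv1 hv2
    apply ext3'
    · have h1 := hKoszul x y (e3 0); linarith
    · have h1 := hKoszul x y (e3 1); linarith
    · have h1 := hKoszul x y (e3 2); linarith
  have n00 : nab (e3 0) (e3 0) = 0 := by
    apply key <;>
      simp only [h00, h01, h02, h10, h20, h11, h22, h12, h21, real_inner_smul_left,
        inner_zero_left, inner_neg_left, e3e3] <;> norm_num [Fin.ext_iff] <;> ring
  have n01 : nab (e3 0) (e3 1) = 0 := by
    apply key <;>
      simp only [h00, h01, h02, h10, h20, h11, h22, h12, h21, real_inner_smul_left,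
        inner_zero_left, inner_neg_left, e3e3] <;> norm_num [Fin.ext_iff] <;> ring
  have n02 : nab (e3 0) (e3 2) = 0 := by
    apply key <;>
      simp only [h00, h01, h02, h10, h20, h11, h22, h12, h21, real_inner_smul_left,
        inner_zero_left, inner_neg_left, e3e3] <;> norm_num [Fin.ext_iff] <;> ring
  have n10 : nab (e3 1) (e3 0) = (-p) • e3 1 := by
    apply key <;>
      simp only [h00, h01, h02, h10, h20, h11, h22, h12, h21, real_inner_smul_left,
        inner_zero_left, inner_neg_left, e3e3] <;> norm_num [Fin.ext_iff] <;> ring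
  have n11 : nab (e3 1) (e3 1) = p • e3 0 := by
    apply key <;>
      simp only [h00, h01, h02, h10, h20, h11, h22, h12, h21, real_inner_smul_left,
        inner_zero_left, inner_neg_left, e3e3] <;> norm_num [Fin.ext_iff] <;> ring
  have n12 : nab (e3 1) (e3 2) = 0 := by
    apply key <;>
      simp only [h00, h01, h02, h10, h20, h11, h22, h12, h21, real_inner_smul_left,
        inner_zero_left, inner_neg_left, e3e3] <;> norm_num [Fin.ext_iff] <;> ring
  have n20 : nab (e3 2) (e3 0) = (-p) • e3 2 := by
    apply key <;>
      simp only [h00, h01, h02, h10, h20, h11, h22, h12, h21, real_inner_smul_left,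
        inner_zero_left, inner_neg_left, e3e3] <;> norm_num [Fin.ext_iff] <;> ring
  have n21 : nab (e3 2) (e3 1) = 0 := by
    apply key <;>
      simp only [h00, h01, h02, h10, h20, h11, h22, h12, h21, real_inner_smul_left,
        inner_zero_left, inner_neg_left, e3e3] <;> norm_num [Fin.ext_iff] <;> ring
  have n22 : nab (e3 2) (e3 2) = p • e3 0 := by
    apply key <;>
      simp only [h00, h01, h02, h10, h20, h11, h22, h12, h21, real_inner_smul_left,
        inner_zero_left, inner_neg_left, e3e3] <;> norm_num [Fin.ext_iff] <;> ring
  intro x y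
  obtain ⟨a0, a1, a2, hx⟩ : ∃ a0 a1 a2, x = a0 • e3 0 + a1 • e3 1 + a2 • e3 2 :=
    ⟨x 0, x 1, x 2, decomp3 x⟩
  obtain ⟨b0, b1, b2, hy⟩ : ∃ b0 b1 b2, y = b0 • e3 0 + b1 • e3 1 + b2 • e3 2 :=
    ⟨y 0, y 1, y 2, decomp3 y⟩
  subst hx hy
  rw [hρ]
  simp only [hR, Fin.sum_univ_three]
  simp only [map_add, map_smul, map_zero, LinearMap.add_apply, LinearMap.smul_apply,
    LinearMap.zero_apply, smul_zero, zero_smul, add_zero, zero_add,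
    h00, h01, h02, h10, h20, h11, h22, h12, h21,
    n00, n01, n02, n10, n11, n12, n20, n21, n22,
    inner_sub_left, inner_add_left, inner_add_right, real_inner_smul_left,
    real_inner_smul_right, e3e3, smul_smul]
  push_cast
  ring
end

section
/- (Example 2, torse-forming Reeb vector field.) Consider ℝ³ with the standard inner product ⟪·,·⟫, standard basis e₀, e₁, e₂, the Lie bracket [e₀,e₁] = p·e₁, [e₀,e₂] = p·e₂, [e₁,e₂] = 0 (p ∈ ℝ), and the Koszul product ∇ defined by 2⟪∇ₓy, z⟫ = ⟪[x,y], z⟫ − ⟪[y,z], x⟫ + ⟪[z,x], y⟫. Let ξ = e₀ and η = ⟪·, e₀⟫. Then for all x ∈ ℝ³: ∇ₓξ = −p·(x − η(x)·ξ); i.e. ξ is torse-forming with constant f = −p. -/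
open RealInnerProductSpace

lemma eq_zero_of_eq_neg {M : Type*} [AddCommGroup M] [Module ℝ M] {a : M}
    (h : a = -a) : a = 0 := by
  have h2 : (2 : ℝ) • a = 0 := by
    rw [two_smul]; nth_rewrite 2 [h]; simp
  rcases smul_eq_zero.mp h2 with h | h
  · norm_num at h
  · exact h

lemma e3_decomp (v : EuclideanSpace ℝ (Fin 3)) :
    v = v 0 • e3 0 + v 1 • e3 1 + v 2 • e3 2 := by
  ext i
  fin_cases i <;> simp [e3, EuclideanSpace.single_apply]

lemma inner_e3_zero (v : EuclideanSpace ℝ (Fin 3)) : ⟪v, e3 0⟫ = v 0 := by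
  simp [e3, EuclideanSpace.inner_single_right]

/-- Example 2, torse-forming Reeb vector field: for the
3-dimensional Lie group with bracket [e₀,e₁] = p·e₁, [e₀,e₂] = p·e₂, [e₁,e₂] = 0,
one has ∇ₓξ = −p·(x − η(x)ξ) with ξ = e₀ and η = ⟪·,e₀⟫; i.e. ξ is torse-forming
with constant f = −p. -/
theorem stmt_17 (p : ℝ)
    (B : EuclideanSpace ℝ (Fin 3) →ₗ[ℝ] EuclideanSpace ℝ (Fin 3) →ₗ[ℝ] EuclideanSpace ℝ (Fin 3))
    (hanti : ∀ x y : EuclideanSpace ℝ (Fin 3), B x y = -B y x)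
    (h01 : B (e3 0) (e3 1) = p • e3 1)
    (h02 : B (e3 0) (e3 2) = p • e3 2)
    (h12 : B (e3 1) (e3 2) = 0)
    (nab : EuclideanSpace ℝ (Fin 3) →ₗ[ℝ] EuclideanSpace ℝ (Fin 3) →ₗ[ℝ] EuclideanSpace ℝ (Fin 3))
    (hKoszul : ∀ x y z : EuclideanSpace ℝ (Fin 3),
      2 * ⟪nab x y, z⟫ = ⟪B x y, z⟫ - ⟪B y z, x⟫ + ⟪B z x, y⟫) :
    ∀ x : EuclideanSpace ℝ (Fin 3),
      nab x (e3 0) = (-p) • (x - ⟪x, e3 0⟫ • e3 0) := by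
  have h00 : B (e3 0) (e3 0) = 0 := eq_zero_of_eq_neg (hanti _ _)
  -- B e0 v = p • (v - ⟪v,e0⟫ • e0)
  have hB0 : ∀ v : EuclideanSpace ℝ (Fin 3),
      B (e3 0) v = p • (v - ⟪v, e3 0⟫ • e3 0) := by
    intro v
    conv_lhs => rw [e3_decomp v]
    rw [map_add, map_add, map_smul, map_smul, map_smul, h00, h01, h02,
      inner_e3_zero]
    conv_rhs => rw [e3_decomp v]
    ext i
    fin_cases i <;> simp [e3, EuclideanSpace.single_apply] <;> ring
  -- ⟪B z x, e0⟫ = 0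
  have hcomp : ∀ z x : EuclideanSpace ℝ (Fin 3), ⟪B z x, e3 0⟫ = 0 := by
    have key : ∀ i j : Fin 3, ⟪B (e3 i) (e3 j), e3 0⟫ = 0 := by
      intro i j
      have h10 : B (e3 1) (e3 0) = -(p • e3 1) := by rw [hanti, h01]
      have h20 : B (e3 2) (e3 0) = -(p • e3 2) := by rw [hanti, h02]
      have h21 : B (e3 2) (e3 1) = 0 := by rw [hanti, h12]; simp
      have h11 : B (e3 1) (e3 1) = 0 := eq_zero_of_eq_neg (hanti _ _)
      have h22 : B (e3 2) (e3 2) = 0 := eq_zero_of_eq_neg (hanti _ _)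
      fin_cases i <;> fin_cases j <;>
        simp only [Fin.zero_eta, Fin.mk_one, show (⟨2, by norm_num⟩ : Fin 3) = 2 from rfl,
          h00, h01, h02, h10, h11, h12, h20, h21, h22] <;>
        simp [inner_e3_zero, e3, EuclideanSpace.single_apply, EuclideanSpace.inner_single_right,
          real_inner_smul_left]
    intro z x
    rw [e3_decomp z, e3_decomp x]
    simp only [map_add, map_smul, LinearMap.add_apply, LinearMap.smul_apply,
      inner_add_left, real_inner_smul_left, key]
    ring
  intro x
  apply ext_inner_right ℝ
  intro z
  have hK := hKoszul x (e3 0) z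
  have hx0 : B x (e3 0) = -(p • (x - ⟪x, e3 0⟫ • e3 0)) := by
    rw [hanti, hB0]
  rw [hx0, hB0, hcomp] at hK
  have hz : ⟪-(p • (x - ⟪x, e3 0⟫ • e3 0)), z⟫
      = -(p * (⟪x, z⟫ - ⟪x, e3 0⟫ * ⟪e3 0, z⟫)) := by
    rw [inner_neg_left, real_inner_smul_left, inner_sub_left,
      real_inner_smul_left]
  have hzx : ⟪p • (z - ⟪z, e3 0⟫ • e3 0), x⟫
      = p * (⟪z, x⟫ - ⟪z, e3 0⟫ * ⟪e3 0, x⟫) := by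
    rw [real_inner_smul_left, inner_sub_left, real_inner_smul_left]
  rw [hz, hzx] at hK
  have htarget : ⟪(-p) • (x - ⟪x, e3 0⟫ • e3 0), z⟫
      = -p * (⟪x, z⟫ - ⟪x, e3 0⟫ * ⟪e3 0, z⟫) := by
    rw [real_inner_smul_left, inner_sub_left, real_inner_smul_left]
  rw [htarget]
  have c1 : ⟪z, x⟫ = ⟪x, z⟫ := real_inner_comm _ _
  have c2 : ⟪e3 0, x⟫ = ⟪x, e3 0⟫ := real_inner_comm _ _
  have c3 : ⟪e3 0, z⟫ = ⟪z, e3 0⟫ := real_inner_comm _ _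
  simp only [c1, c2, c3] at hK ⊢
  linear_combination hK / 2
end

section
/- (Example 2, class F₅ property.) Consider ℝ³ with the standard inner product ⟪·,·⟫, standard basis e₀, e₁, e₂, the Lie bracket [e₀,e₁] = p·e₁, [e₀,e₂] = p·e₂, [e₁,e₂] = 0 (p ∈ ℝ), and the Koszul product ∇ defined by 2⟪∇ₓy, z⟫ = ⟪[x,y], z⟫ − ⟪[y,z], x⟫ + ⟪[z,x], y⟫. Let ξ = e₀, η = ⟪·, e₀⟫, and let φ be the linear map with φ(e₀) = 0, φ(e₁) = e₂, φ(e₂) = e₁. Then for all x, y ∈ ℝ³: ∇ₓ(φ(y)) − φ(∇ₓy) = p·(⟪x, φ(y)⟫·ξ + η(y)·φ(x)); i.e. the structure satisfies the defining identity (∇ₓφ)y = −f{g(x, φy)ξ + η(y)φx} of an F₅-manifold with torse-forming Reeb vector field with constant f = −p. -/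
open RealInnerProductSpace

set_option maxHeartbeats 2000000 in
/-- Example 2, class F₅ property: for the 3-dimensional Lie group
with bracket [e₀,e₁] = p·e₁, [e₀,e₂] = p·e₂, [e₁,e₂] = 0, ξ = e₀, η = ⟪·,e₀⟫ and
φ given by φ(e₀) = 0, φ(e₁) = e₂, φ(e₂) = e₁, one has
(∇ₓφ)y = p·(⟪x,φ(y)⟫ξ + η(y)φ(x)); i.e. the structure satisfies the defining
identity (∇ₓφ)y = −f{g(x,φy)ξ + η(y)φx} of an F₅-manifold with torse-forming
Reeb vector field with constant f = −p. -/
theorem stmt_19 (p : ℝ)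
    (B : EuclideanSpace ℝ (Fin 3) →ₗ[ℝ] EuclideanSpace ℝ (Fin 3) →ₗ[ℝ] EuclideanSpace ℝ (Fin 3))
    (hanti : ∀ x y : EuclideanSpace ℝ (Fin 3), B x y = -B y x)
    (h01 : B (e3 0) (e3 1) = p • e3 1)
    (h02 : B (e3 0) (e3 2) = p • e3 2)
    (h12 : B (e3 1) (e3 2) = 0)
    (nab : EuclideanSpace ℝ (Fin 3) →ₗ[ℝ] EuclideanSpace ℝ (Fin 3) →ₗ[ℝ] EuclideanSpace ℝ (Fin 3))
    (hKoszul : ∀ x y z : EuclideanSpace ℝ (Fin 3),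
      2 * ⟪nab x y, z⟫ = ⟪B x y, z⟫ - ⟪B y z, x⟫ + ⟪B z x, y⟫)
    (φ : EuclideanSpace ℝ (Fin 3) →ₗ[ℝ] EuclideanSpace ℝ (Fin 3))
    (hφ0 : φ (e3 0) = 0) (hφ1 : φ (e3 1) = e3 2) (hφ2 : φ (e3 2) = e3 1) :
    ∀ x y : EuclideanSpace ℝ (Fin 3),
      nab x (φ y) - φ (nab x y) =
        p • (⟪x, φ y⟫ • e3 0 + ⟪y, e3 0⟫ • φ x) := by
  have hBxx : ∀ x, B x x = 0 := by
    intro x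
    have h := hanti x x
    have h3 : (2 : ℝ) • B x x = 0 := by
      rw [two_smul]; nth_rewrite 1 [h]; exact neg_add_cancel _
    simpa using h3
  have h10 : B (e3 1) (e3 0) = -(p • e3 1) := by rw [hanti, h01]
  have h20 : B (e3 2) (e3 0) = -(p • e3 2) := by rw [hanti, h02]
  have h21 : B (e3 2) (e3 1) = 0 := by rw [hanti, h12]; simp
  have ext3 : ∀ a b : EuclideanSpace ℝ (Fin 3), (∀ i, ⟪a, e3 i⟫ = ⟪b, e3 i⟫) → a = b := by
    intro a b h
    ext i
    have := h i
    simpa [e3, EuclideanSpace.inner_single_right] using this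
  have nabEq : ∀ x y w : EuclideanSpace ℝ (Fin 3),
      (∀ i : Fin 3, 2 * ⟪w, e3 i⟫ = ⟪B x y, e3 i⟫ - ⟪B y (e3 i), x⟫ + ⟪B (e3 i) x, y⟫) →
      nab x y = w := by
    intro x y w h
    apply ext3
    intro i
    have h1 := hKoszul x y (e3 i)
    have h2 := h i
    linarith
  have n00 : nab (e3 0) (e3 0) = 0 := by
    apply nabEq; intro i; fin_cases i <;>
      · simp only [show (⟨0, by norm_num⟩ : Fin 3) = 0 from rfl,
          show (⟨1, by norm_num⟩ : Fin 3) = 1 from rfl,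
          show (⟨2, by norm_num⟩ : Fin 3) = 2 from rfl,
          hBxx, h01, h02, h12, h10, h20, h21]
        simp [e3, real_inner_smul_left, inner_smul_right, EuclideanSpace.inner_single_left]
  have n01 : nab (e3 0) (e3 1) = 0 := by
    apply nabEq; intro i; fin_cases i <;>
      · simp only [show (⟨0, by norm_num⟩ : Fin 3) = 0 from rfl,
          show (⟨1, by norm_num⟩ : Fin 3) = 1 from rfl,
          show (⟨2, by norm_num⟩ : Fin 3) = 2 from rfl,
          hBxx, h01, h02, h12, h10, h20, h21]
        simp [e3, real_inner_smul_left, inner_smul_right, EuclideanSpace.inner_single_left]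
  have n02 : nab (e3 0) (e3 2) = 0 := by
    apply nabEq; intro i; fin_cases i <;>
      · simp only [show (⟨0, by norm_num⟩ : Fin 3) = 0 from rfl,
          show (⟨1, by norm_num⟩ : Fin 3) = 1 from rfl,
          show (⟨2, by norm_num⟩ : Fin 3) = 2 from rfl,
          hBxx, h01, h02, h12, h10, h20, h21]
        simp [e3, real_inner_smul_left, inner_smul_right, EuclideanSpace.inner_single_left]
  have n10 : nab (e3 1) (e3 0) = -(p • e3 1) := by
    apply nabEq; intro i; fin_cases i <;>
      · simp only [show (⟨0, by norm_num⟩ : Fin 3) = 0 from rfl,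
          show (⟨1, by norm_num⟩ : Fin 3) = 1 from rfl,
          show (⟨2, by norm_num⟩ : Fin 3) = 2 from rfl,
          hBxx, h01, h02, h12, h10, h20, h21]
        simp [e3, real_inner_smul_left, inner_smul_right, EuclideanSpace.inner_single_left]
        try ring
  have n20 : nab (e3 2) (e3 0) = -(p • e3 2) := by
    apply nabEq; intro i; fin_cases i <;>
      · simp only [show (⟨0, by norm_num⟩ : Fin 3) = 0 from rfl,
          show (⟨1, by norm_num⟩ : Fin 3) = 1 from rfl,
          show (⟨2, by norm_num⟩ : Fin 3) = 2 from rfl,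
          hBxx, h01, h02, h12, h10, h20, h21]
        simp [e3, real_inner_smul_left, inner_smul_right, EuclideanSpace.inner_single_left]
        try ring
  have n11 : nab (e3 1) (e3 1) = p • e3 0 := by
    apply nabEq; intro i; fin_cases i <;>
      · simp only [show (⟨0, by norm_num⟩ : Fin 3) = 0 from rfl,
          show (⟨1, by norm_num⟩ : Fin 3) = 1 from rfl,
          show (⟨2, by norm_num⟩ : Fin 3) = 2 from rfl,
          hBxx, h01, h02, h12, h10, h20, h21]
        simp [e3, real_inner_smul_left, inner_smul_right, EuclideanSpace.inner_single_left]
        try ring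
  have n22 : nab (e3 2) (e3 2) = p • e3 0 := by
    apply nabEq; intro i; fin_cases i <;>
      · simp only [show (⟨0, by norm_num⟩ : Fin 3) = 0 from rfl,
          show (⟨1, by norm_num⟩ : Fin 3) = 1 from rfl,
          show (⟨2, by norm_num⟩ : Fin 3) = 2 from rfl,
          hBxx, h01, h02, h12, h10, h20, h21]
        simp [e3, real_inner_smul_left, inner_smul_right, EuclideanSpace.inner_single_left]
        try ring
  have n12 : nab (e3 1) (e3 2) = 0 := by
    apply nabEq; intro i; fin_cases i <;>
      · simp only [show (⟨0, by norm_num⟩ : Fin 3) = 0 from rfl,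
          show (⟨1, by norm_num⟩ : Fin 3) = 1 from rfl,
          show (⟨2, by norm_num⟩ : Fin 3) = 2 from rfl,
          hBxx, h01, h02, h12, h10, h20, h21]
        simp [e3, real_inner_smul_left, inner_smul_right, EuclideanSpace.inner_single_left]
  have n21 : nab (e3 2) (e3 1) = 0 := by
    apply nabEq; intro i; fin_cases i <;>
      · simp only [show (⟨0, by norm_num⟩ : Fin 3) = 0 from rfl,
          show (⟨1, by norm_num⟩ : Fin 3) = 1 from rfl,
          show (⟨2, by norm_num⟩ : Fin 3) = 2 from rfl,
          hBxx, h01, h02, h12, h10, h20, h21]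
        simp [e3, real_inner_smul_left, inner_smul_right, EuclideanSpace.inner_single_left]
  have decomp : ∀ v : EuclideanSpace ℝ (Fin 3), v = v 0 • e3 0 + v 1 • e3 1 + v 2 • e3 2 := by
    intro v; ext i; fin_cases i <;> simp [e3, EuclideanSpace.single_apply]
  intro x y
  rw [decomp x, decomp y]
  have i00 : (⟪e3 0, e3 0⟫ : ℝ) = 1 := by simp [e3]
  have i11 : (⟪e3 1, e3 1⟫ : ℝ) = 1 := by simp [e3]
  have i22 : (⟪e3 2, e3 2⟫ : ℝ) = 1 := by simp [e3]
  have i01 : (⟪e3 0, e3 1⟫ : ℝ) = 0 := by simp [e3, EuclideanSpace.inner_single_left]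
  have i02 : (⟪e3 0, e3 2⟫ : ℝ) = 0 := by simp [e3, EuclideanSpace.inner_single_left]
  have i10 : (⟪e3 1, e3 0⟫ : ℝ) = 0 := by simp [e3, EuclideanSpace.inner_single_left]
  have i12 : (⟪e3 1, e3 2⟫ : ℝ) = 0 := by simp [e3, EuclideanSpace.inner_single_left]
  have i20 : (⟪e3 2, e3 0⟫ : ℝ) = 0 := by simp [e3, EuclideanSpace.inner_single_left]
  have i21 : (⟪e3 2, e3 1⟫ : ℝ) = 0 := by simp [e3, EuclideanSpace.inner_single_left]
  simp only [map_add, map_smul, LinearMap.add_apply, LinearMap.smul_apply,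
    inner_add_left, inner_add_right, real_inner_smul_left, real_inner_smul_right,
    n00, n01, n02, n10, n20, n11, n22, n12, n21, hφ0, hφ1, hφ2,
    i00, i11, i22, i01, i02, i10, i12, i20, i21,
    mul_one, mul_zero, zero_smul, smul_zero, smul_neg, add_zero, zero_add, smul_add, smul_smul]
  simp only [map_neg, map_smul, hφ1, hφ2]
  module
end
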